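/- Let ℓ be the line {x : ⟪x − q, n⟫ = 0} in the Euclidean plane ℝ² (q a point, n a nonzero vector), H = {x : ⟪x − q, n⟫ ≤ 0}, R the orthogonal reflection across ℓ, and F the fold map across ℓ towards H. Let a, b be points such that the line ℓ does not meet the open segment between a and b (i.e., the fold line does not stab the segment). Then F '' [a,b] = [F a, F b]: the fold maps the segment onto the segment between the images of its endpoints, so the segment is not split into two. -/

import Mathlib

open RealInnerProductSpace

private lemma aff_image {E : Type*} [AddCommGroup E] [Module ℝ E]
    (g : E → E) (a b : E)
    (hg : ∀ u v : ℝ, ∀ x y : E, 0 ≤ u → 0 ≤ v → u + v = 1 →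
      g (u • x + v • y) = u • g x + v • g y) :
    g '' segment ℝ a b = segment ℝ (g a) (g b) := by
  ext z
  constructor
  · rintro ⟨x, ⟨u, v, hu, hv, huv, rfl⟩, rfl⟩
    exact ⟨u, v, hu, hv, huv, (hg u v a b hu hv huv).symm⟩
  · rintro ⟨u, v, hu, hv, huv, rfl⟩
    exact ⟨u • a + v • b, ⟨u, v, hu, hv, huv, rfl⟩, hg u v a b hu hv huv⟩

theorem fold_of_nonstabbed_segment
    (q n : EuclideanSpace ℝ (Fin 2)) (hn : n ≠ 0)
    (R F : EuclideanSpace ℝ (Fin 2) → EuclideanSpace ℝ (Fin 2))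
    (hR : ∀ x, R x = x - (2 * ⟪x - q, n⟫ / ⟪n, n⟫) • n)
    (hF : ∀ x, F x = if ⟪x - q, n⟫ ≤ 0 then x else R x)
    (a b : EuclideanSpace ℝ (Fin 2))
    (hmiss : ∀ t : ℝ, 0 < t → t < 1 →
      ⟪((1 - t) • a + t • b) - q, n⟫ ≠ 0) :
    F '' segment ℝ a b = segment ℝ (F a) (F b) := by
  set fa := ⟪a - q, n⟫ with hfa
  set fb := ⟪b - q, n⟫ with hfb
  have hcomb : ∀ u v : ℝ, u + v = 1 →
      ⟪(u • a + v • b) - q, n⟫ = u * fa + v * fb := by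
    intro u v huv
    have h1 : (u • a + v • b) - q = u • (a - q) + v • (b - q) := by
      match_scalars <;> linarith
    rw [h1, inner_add_left, real_inner_smul_left, real_inner_smul_left]
  -- sign consistency
  have hsign : (fa ≤ 0 ∧ fb ≤ 0) ∨ (0 ≤ fa ∧ 0 ≤ fb) := by
    by_contra h
    push_neg at h
    obtain ⟨h1, h2⟩ := h
    have hcase : (0 < fa ∧ fb < 0) ∨ (fa < 0 ∧ 0 < fb) := by
      rcases le_or_gt fa 0 with h3 | h3
      · have h4 : 0 < fb := h1 h3
        rcases lt_or_eq_of_le h3 with h5 | h5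
        · exact Or.inr ⟨h5, h4⟩
        · have := h2 (le_of_eq h5.symm)
          linarith
      · exact Or.inl ⟨h3, h2 h3.le⟩
    have key : ∀ fa' fb' : ℝ, fa' < 0 → 0 < fb' → fa' = fa ∧ fb' = fb ∨ fa' = fb ∧ fb' = fa →
        False := by
      intro fa' fb' hna hpb hor
      set t := fa' / (fa' - fb') with ht
      have hd : fa' - fb' < 0 := by linarith
      have ht0 : 0 < t := div_pos_of_neg_of_neg hna hd
      have hd' : fa' - fb' ≠ 0 := ne_of_lt hd
      have h1t : 1 - t = (-fb') / (fa' - fb') := by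
        rw [ht, eq_div_iff hd', sub_mul, one_mul, div_mul_cancel₀ _ hd']
        ring
      have ht1 : t < 1 := by
        have : 0 < 1 - t := h1t ▸ div_pos_of_neg_of_neg (by linarith) hd
        linarith
      rcases hor with ⟨e1, e2⟩ | ⟨e1, e2⟩
      · apply hmiss t ht0 ht1
        rw [hcomb (1 - t) t (by ring), ← e1, ← e2, h1t, ht,
          div_mul_eq_mul_div, div_mul_eq_mul_div, ← add_div]
        rw [div_eq_zero_iff]
        left; ring
      · apply hmiss (1 - t) (by linarith) (by linarith)
        rw [hcomb (1 - (1 - t)) (1 - t) (by ring), ← e1, ← e2]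
        rw [show (1 - (1 - t)) = t by ring, h1t, ht,
          div_mul_eq_mul_div, div_mul_eq_mul_div, ← add_div]
        rw [div_eq_zero_iff]
        left; ring
    rcases hcase with ⟨hpa, hnb⟩ | ⟨hna, hpb⟩
    · exact key fb fa hnb hpa (Or.inr ⟨rfl, rfl⟩)
    · exact key fa fb hna hpb (Or.inl ⟨rfl, rfl⟩)
  rcases hsign with ⟨ha, hb⟩ | ⟨ha, hb⟩
  · -- F = id on the segment
    have hid : ∀ x ∈ segment ℝ a b, F x = x := by
      rintro x ⟨u, v, hu, hv, huv, rfl⟩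
      rw [hF, if_pos]
      rw [hcomb u v huv]
      have := mul_nonpos_of_nonneg_of_nonpos hu ha
      have := mul_nonpos_of_nonneg_of_nonpos hv hb
      linarith
    rw [Set.image_congr hid, Set.image_id',
      hid a (left_mem_segment ℝ a b), hid b (right_mem_segment ℝ a b)]
  · -- F = R on the segment, R is affine
    have hRfix : ∀ x, ⟪x - q, n⟫ = 0 → R x = x := by
      intro x hx
      rw [hR, hx]
      simp
    have hFR : ∀ x, 0 ≤ ⟪x - q, n⟫ → F x = R x := by
      intro x hx
      rw [hF]
      split_ifs with h
      · exact (hRfix x (le_antisymm h hx)).symm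
      · rfl
    have hRaff : ∀ u v : ℝ, ∀ x y : EuclideanSpace ℝ (Fin 2), u + v = 1 →
        R (u • x + v • y) = u • R x + v • R y := by
      intro u v x y huv
      have h1 : (u • x + v • y) - q = u • (x - q) + v • (y - q) := by
        match_scalars <;> linarith
      rw [hR, hR, hR, h1, inner_add_left, real_inner_smul_left, real_inner_smul_left]
      match_scalars <;> ring
    have hFseg : ∀ x ∈ segment ℝ a b, F x = R x := by
      rintro x ⟨u, v, hu, hv, huv, rfl⟩
      apply hFR
      rw [hcomb u v huv]
      positivity
    rw [Set.image_congr hFseg, hFR a ha, hFR b hb]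
    exact aff_image R a b (fun u v x y _ _ huv => hRaff u v x y huv)
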